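/- A one-dimensional symmetric quantum walk U_QW(α,β,η) on ℂ²⊗ℓ²(ℤ), conjugated by the unitary relabeling I (with I|+1⊗k⟩=|2k⟩, I|−1⊗k⟩=|2k+1⟩), equals the BB matrix built from the scattering matrices S_{2j+1} = i[[0,1],[1,0]] and S_{2j} = −i e^{−iη_j}[[β_j, ᾱ_j],[α_j, −β̄_j]]. -/

import Mathlib

open Complex

noncomputable section

/-- `ℂ² ⊗ ℓ²(ℤ)`; the coin index is a `Bool` (`true` = +1, `false` = −1). -/
abbrev H2 := lp (fun _ : Bool × ℤ => ℂ) 2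
/-- `ℓ²(ℤ)`. -/
abbrev HZ := lp (fun _ : ℤ => ℂ) 2

def bv (τ : Bool) (j : ℤ) : H2 := lp.single 2 (τ, j) 1
def δZ (k : ℤ) : HZ := lp.single 2 k 1

/-- `De` built from an arbitrary family of 2×2 blocks `T_{2k}` acting on
`span{|2k⟩, |2k+1⟩}`. -/
def IsDeM (T : ℤ → Matrix (Fin 2) (Fin 2) ℂ) (De : HZ →L[ℂ] HZ) : Prop :=
  ∀ k : ℤ,
    De (δZ (2 * k)) = T (2 * k) 0 0 • δZ (2 * k) + T (2 * k) 1 0 • δZ (2 * k + 1) ∧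
    De (δZ (2 * k + 1)) = T (2 * k) 0 1 • δZ (2 * k) + T (2 * k) 1 1 • δZ (2 * k + 1)

/-- `Do` built from an arbitrary family of 2×2 blocks `T_{2k+1}` acting on
`span{|2k+1⟩, |2k+2⟩}`. -/
def IsDoM (T : ℤ → Matrix (Fin 2) (Fin 2) ℂ) (Do : HZ →L[ℂ] HZ) : Prop :=
  ∀ k : ℤ,
    Do (δZ (2 * k + 1)) =
      T (2 * k + 1) 0 0 • δZ (2 * k + 1) + T (2 * k + 1) 1 0 • δZ (2 * k + 2) ∧
    Do (δZ (2 * k + 2)) =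
      T (2 * k + 1) 0 1 • δZ (2 * k + 1) + T (2 * k + 1) 1 1 • δZ (2 * k + 2)

/-- The scattering matrices corresponding to a quantum walk with coins
`C(j) = e^{-iη_j} [[α_j, -β̄_j],[β_j, ᾱ_j]]`:
`S_{2j+1} = i [[0,1],[1,0]]` and `S_{2j} = -i e^{-iη_j} [[β_j, ᾱ_j],[α_j, -β̄_j]]`. -/
def Tqw (α β : ℤ → ℂ) (η : ℤ → ℝ) (m : ℤ) : Matrix (Fin 2) (Fin 2) ℂ :=
  if Even m then
    (-Complex.I * Complex.exp (-Complex.I * η (m / 2))) •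
      !![β (m / 2), starRingEnd ℂ (α (m / 2));
         α (m / 2), -(starRingEnd ℂ (β (m / 2)))]
  else Complex.I • !![0, 1; 1, 0]

-- auxiliary lemmas

lemma dense_span_δZ :
    Dense (Submodule.span ℂ (Set.range δZ) : Set HZ) := by
  intro f
  have h := lp.hasSum_single (E := fun _ : ℤ => ℂ) (p := 2) (by norm_num) f
  refine mem_closure_of_tendsto h (Filter.Eventually.of_forall fun s => ?_)
  refine Submodule.sum_mem _ fun i _ => ?_
  have hsingle : lp.single 2 i (f i) = f i • δZ i := by
    have := lp.single_smul (E := fun _ : ℤ => ℂ) (𝕜 := ℂ) 2 i (f i) (1 : ℂ)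
    rw [smul_eq_mul, mul_one] at this
    rw [this]
    rfl
  rw [hsingle]
  exact Submodule.smul_mem _ _ (Submodule.subset_span ⟨i, rfl⟩)

lemma Tqw_even (α β : ℤ → ℂ) (η : ℤ → ℝ) (k : ℤ) :
    Tqw α β η (2 * k) =
      (-Complex.I * Complex.exp (-Complex.I * η k)) •
        !![β k, starRingEnd ℂ (α k); α k, -(starRingEnd ℂ (β k))] := by
  unfold Tqw
  rw [if_pos (even_two_mul k), Int.mul_ediv_cancel_left _ two_ne_zero]

lemma Tqw_odd (α β : ℤ → ℂ) (η : ℤ → ℝ) (k : ℤ) :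
    Tqw α β η (2 * k + 1) = Complex.I • !![0, 1; 1, 0] := by
  unfold Tqw
  rw [if_neg (by simp [Int.even_add_one, parity_simps])]

set_option synthInstance.maxHeartbeats 1000000 in
/-- A one-dimensional symmetric quantum walk, conjugated by the relabeling
`I|+1⊗k⟩=|2k⟩, I|−1⊗k⟩=|2k+1⟩`, is the BB matrix built from the scattering
matrices `S_{2j+1} = i[[0,1],[1,0]]`, `S_{2j} = -i e^{-iη_j}[[β_j,ᾱ_j],[α_j,-β̄_j]]`. -/
theorem qw_is_bb (α β : ℤ → ℂ) (η : ℤ → ℝ)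
    (hab : ∀ j, ‖α j‖ ^ 2 + ‖β j‖ ^ 2 = 1)
    (Cop : H2 →L[ℂ] H2)
    (hCop : ∀ j : ℤ,
      Cop (bv true j) =
        (Complex.exp (-Complex.I * η j) * α j) • bv true j +
        (Complex.exp (-Complex.I * η j) * β j) • bv false j ∧
      Cop (bv false j) =
        (Complex.exp (-Complex.I * η j) * -(starRingEnd ℂ (β j))) • bv true j +
        (Complex.exp (-Complex.I * η j) * starRingEnd ℂ (α j)) • bv false j)
    (S : H2 →L[ℂ] H2)
    (hS : ∀ (τ : Bool) (j : ℤ), S (bv τ j) = bv τ (j + if τ then 1 else -1))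
    (Iop : H2 ≃ₗᵢ[ℂ] HZ)
    (hI : ∀ k : ℤ, Iop (bv true k) = δZ (2 * k) ∧ Iop (bv false k) = δZ (2 * k + 1))
    (De Do : HZ →L[ℂ] HZ)
    (hDe : IsDeM (Tqw α β η) De) (hDo : IsDoM (Tqw α β η) Do) :
    ∀ x : HZ, Iop (S (Cop (Iop.symm x))) = Do (De x) := by
  -- package LHS and RHS as continuous linear maps
  set IopL : H2 →L[ℂ] HZ := Iop.toContinuousLinearEquiv.toContinuousLinearMap with hIopL
  set IopLs : HZ →L[ℂ] H2 := Iop.symm.toContinuousLinearEquiv.toContinuousLinearMap with hIopLs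
  set L1 : HZ →L[ℂ] HZ := IopL.comp (S.comp (Cop.comp IopLs)) with hL1
  set L2 : HZ →L[ℂ] HZ := Do.comp De with hL2
  have key : L1 = L2 := by
    apply ContinuousLinearMap.ext_on dense_span_δZ
    rintro _ ⟨k, rfl⟩
    obtain ⟨m, rfl | rfl⟩ := k.even_or_odd'
    · -- even site
      show IopL (S (Cop (IopLs (δZ (2 * m))))) = Do (De (δZ (2 * m)))
      have hsym : IopLs (δZ (2 * m)) = bv true m := by
        show Iop.symm (δZ (2 * m)) = bv true m
        rw [← (hI m).1, LinearIsometryEquiv.symm_apply_apply]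
      have hDo0 : Do (δZ (2 * m)) = Complex.I • δZ (2 * m - 1) := by
        have h := (hDo (m - 1)).2
        rw [show 2 * (m - 1) + 2 = 2 * m by ring, show 2 * (m - 1) + 1 = 2 * m - 1 by ring,
          show (2 : ℤ) * m - 1 = 2 * (m - 1) + 1 by ring, Tqw_odd] at h
        rw [show (2 : ℤ) * m - 1 = 2 * (m - 1) + 1 by ring]
        simpa [Matrix.smul_apply] using h
      have hDo1 : Do (δZ (2 * m + 1)) = Complex.I • δZ (2 * m + 2) := by
        have h := (hDo m).1
        rw [Tqw_odd] at h
        simpa [Matrix.smul_apply] using h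
      rw [hsym, (hCop m).1, map_add, map_smul, map_smul, hS true m, hS false m,
        map_add, map_smul, map_smul]
      have h1 : IopL (bv true (m + 1)) = δZ (2 * m + 2) := by
        show Iop (bv true (m + 1)) = _
        rw [(hI (m + 1)).1]; norm_num; ring_nf
      have h2 : IopL (bv false (m + -1)) = δZ (2 * m - 1) := by
        show Iop (bv false (m + -1)) = _
        rw [(hI (m + -1)).2]; norm_num; ring_nf
      rw [if_pos rfl, if_neg (by simp), h1, h2, (hDe m).1, map_add, map_smul, map_smul,
        hDo0, hDo1, Tqw_even]
      simp only [Matrix.smul_apply, Matrix.cons_val', Matrix.cons_val_zero, Matrix.cons_val_one,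
        Matrix.head_cons, Matrix.head_fin_const, Matrix.empty_val', Matrix.cons_val_fin_one,
        Matrix.of_apply, smul_smul, smul_eq_mul]
      match_scalars
      · linear_combination (Complex.exp (-Complex.I * (η m : ℂ)) * α m) * Complex.I_mul_I
      · linear_combination (Complex.exp (-Complex.I * (η m : ℂ)) * β m) * Complex.I_mul_I
    · -- odd site
      show IopL (S (Cop (IopLs (δZ (2 * m + 1))))) = Do (De (δZ (2 * m + 1)))
      have hsym : IopLs (δZ (2 * m + 1)) = bv false m := by
        show Iop.symm (δZ (2 * m + 1)) = bv false m
        rw [← (hI m).2, LinearIsometryEquiv.symm_apply_apply]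
      have hDo0 : Do (δZ (2 * m)) = Complex.I • δZ (2 * m - 1) := by
        have h := (hDo (m - 1)).2
        rw [show 2 * (m - 1) + 2 = 2 * m by ring, show 2 * (m - 1) + 1 = 2 * m - 1 by ring,
          show (2 : ℤ) * m - 1 = 2 * (m - 1) + 1 by ring, Tqw_odd] at h
        rw [show (2 : ℤ) * m - 1 = 2 * (m - 1) + 1 by ring]
        simpa [Matrix.smul_apply] using h
      have hDo1 : Do (δZ (2 * m + 1)) = Complex.I • δZ (2 * m + 2) := by
        have h := (hDo m).1
        rw [Tqw_odd] at h
        simpa [Matrix.smul_apply] using h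
      rw [hsym, (hCop m).2, map_add, map_smul, map_smul, hS true m, hS false m,
        map_add, map_smul, map_smul]
      have h1 : IopL (bv true (m + 1)) = δZ (2 * m + 2) := by
        show Iop (bv true (m + 1)) = _
        rw [(hI (m + 1)).1]; norm_num; ring_nf
      have h2 : IopL (bv false (m + -1)) = δZ (2 * m - 1) := by
        show Iop (bv false (m + -1)) = _
        rw [(hI (m + -1)).2]; norm_num; ring_nf
      rw [if_pos rfl, if_neg (by simp), h1, h2, (hDe m).2, map_add, map_smul, map_smul,
        hDo0, hDo1, Tqw_even]
      simp only [Matrix.smul_apply, Matrix.cons_val', Matrix.cons_val_zero, Matrix.cons_val_one,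
        Matrix.head_cons, Matrix.head_fin_const, Matrix.empty_val', Matrix.cons_val_fin_one,
        Matrix.of_apply, smul_smul, smul_eq_mul]
      match_scalars
      · linear_combination (Complex.exp (-Complex.I * (η m : ℂ)) * -(starRingEnd ℂ (β m))) * Complex.I_mul_I
      · linear_combination (Complex.exp (-Complex.I * (η m : ℂ)) * starRingEnd ℂ (α m)) * Complex.I_mul_I
  intro x
  calc Iop (S (Cop (Iop.symm x))) = L1 x := rfl
    _ = L2 x := by rw [key]
    _ = Do (De x) := rfl
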